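/- Let L be an autonomous Tonelli Lagrangian on a compact manifold M. Then for every c ∈ H¹(M,ℝ), the subspace R(c) = V(𝓖(c))^⊥ is contained in E(c) = V(𝓐(c))^⊥, and (using Massart's theorem that E(c) ⊂ VF(c)) R(c) ⊂ VF(c), the direction space of the maximal flat of Mather's α function containing c in its relative interior. Hence every admissible curve of cohomology classes is contained in a single flat of α, and every C-equivalence class is contained in a flat. -/

import Mathlib

open Set Filter

noncomputable section

variable {H : Type*} [NormedAddCommGroup H] [NormedSpace ℝ H]

/-- The annihilator `S^⊥` of a subspace of `H₁(M,ℝ)` inside `H¹(M,ℝ)`,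
identified with the continuous dual of `H₁(M,ℝ)`. -/
def ann (S : Submodule ℝ H) : Submodule ℝ (H →L[ℝ] ℝ) where
  carrier := { f | ∀ v ∈ S, f v = 0 }
  add_mem' := by intro f g hf hg v hv; simp [hf v hv, hg v hv]
  zero_mem' := by intro v hv; simp
  smul_mem' := by intro a f hf v hv; simp [hf v hv]

/-- `V(A) = ⋂ { i_{U*} H₁(U,ℝ) : U ⊇ A open }`, where `W U` is the image of the
map induced on first homology by the inclusion of the open set `U`. -/
def VA {M : Type*} [TopologicalSpace M] (W : Set M → Submodule ℝ H) (A : Set M) :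
    Submodule ℝ H :=
  ⨅ U ∈ { U : Set M | IsOpen U ∧ A ⊆ U }, W U

/-- A flat of `α`: a closed convex set on which `α` is affine. -/
def IsFlat (α : (H →L[ℝ] ℝ) → ℝ) (K : Set (H →L[ℝ] ℝ)) : Prop :=
  IsClosed K ∧ Convex ℝ K ∧
    ∃ (l : (H →L[ℝ] ℝ) →ₗ[ℝ] ℝ) (r : ℝ), ∀ x ∈ K, α x = l x + r

/-- The direction space `Vect(K - K)` of a convex set. -/
def flatSpan (K : Set (H →L[ℝ] ℝ)) : Submodule ℝ (H →L[ℝ] ℝ) :=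
  Submodule.span ℝ { v | ∃ x ∈ K, ∃ y ∈ K, v = x - y }

/-- `c` lies in the relative interior of `K`. -/
def InRelInterior (c : H →L[ℝ] ℝ) (K : Set (H →L[ℝ] ℝ)) : Prop :=
  ∃ ε > 0, ∀ v ∈ (flatSpan K : Set (H →L[ℝ] ℝ)), ‖v‖ < ε → c + v ∈ K

/-- The direction space `VF(c)` of the maximal flat `F(c)` of `α` containing `c`
in its relative interior. -/
def VF (α : (H →L[ℝ] ℝ) → ℝ) (c : H →L[ℝ] ℝ) : Submodule ℝ (H →L[ℝ] ℝ) :=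
  flatSpan (⋃₀ { K | IsFlat α K ∧ InRelInterior c K })

/-- An admissible curve of cohomology classes: locally, `c(t) - c(t₀)` stays in
the subspace `R(c(t₀))` of allowed directions. -/
def Admissible (R : (H →L[ℝ] ℝ) → Submodule ℝ (H →L[ℝ] ℝ))
    (cc : ℝ → H →L[ℝ] ℝ) : Prop :=
  Continuous cc ∧ ∀ t₀ : ℝ, ∃ δ > 0, ∀ t ∈ Icc (t₀ - δ) (t₀ + δ),
    cc t - cc t₀ ∈ R (cc t₀)

/-- C-equivalence of two cohomology classes. -/
def CEquiv (R : (H →L[ℝ] ℝ) → Submodule ℝ (H →L[ℝ] ℝ)) (c₀ c₁ : H →L[ℝ] ℝ) :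
    Prop :=
  ∃ cc : ℝ → H →L[ℝ] ℝ, Admissible R cc ∧ cc 0 = c₀ ∧ cc 1 = c₁

theorem aux_subgradient [FiniteDimensional ℝ H] (α : (H →L[ℝ] ℝ) → ℝ)
    (hconv : ConvexOn ℝ Set.univ α) (hcont : Continuous α) (c : H →L[ℝ] ℝ) :
    ∃ (l : (H →L[ℝ] ℝ) →ₗ[ℝ] ℝ) (r : ℝ), (∀ x, l x + r ≤ α x) ∧ α c = l c + r := by
  set s : Set ((H →L[ℝ] ℝ) × ℝ) := {p | α p.1 < p.2} with hs
  have hsconv : Convex ℝ s := by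
    intro p hp q hq a b ha hb hab
    have h := hconv.2 (Set.mem_univ p.1) (Set.mem_univ q.1) ha hb hab
    have h2 : a * α p.1 + b * α q.1 < a * p.2 + b * q.2 := by
      rcases eq_or_lt_of_le ha with h0 | hpos
      · have hb1 : b = 1 := by linarith
        have := (mul_lt_mul_iff_right₀ (by linarith : (0:ℝ) < b)).2 hq
        simp only [← h0, hb1] at *; linarith
      · have h1 : a * α p.1 < a * p.2 := (mul_lt_mul_iff_right₀ hpos).2 hp
        have h2 : b * α q.1 ≤ b * q.2 := mul_le_mul_of_nonneg_left (le_of_lt hq) hb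
        linarith
    have : α (a • p + b • q).1 ≤ a * α p.1 + b * α q.1 := by
      simpa [smul_eq_mul] using h
    have hlt : α (a • p + b • q).1 < (a • p + b • q).2 := by
      simp only [Prod.snd_add, Prod.smul_snd, smul_eq_mul]
      linarith
    exact hlt
  have hsopen : IsOpen s := isOpen_lt (hcont.comp continuous_fst) continuous_snd
  have hnot : ((c, α c) : (H →L[ℝ] ℝ) × ℝ) ∉ s := by simp [hs]
  obtain ⟨f, hf⟩ := geometric_hahn_banach_open_point hsconv hsopen hnot
  set β := f (0, 1) with hβ
  have hsplit : ∀ (x : H →L[ℝ] ℝ) (y : ℝ), f (x, y) = f (x, 0) + y * β := by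
    intro x y
    have h1 : ((x, y) : (H →L[ℝ] ℝ) × ℝ) = (x, 0) + y • (0, 1) := by
      simp [Prod.ext_iff]
    rw [h1, map_add, map_smul, smul_eq_mul]
  have hβneg : β < 0 := by
    have h := hf (c, α c + 1) (by simp [hs])
    rw [hsplit c (α c + 1), hsplit c (α c)] at h; linarith
  have hγ : (0:ℝ) < -β := by linarith
  have key : ∀ x, f (x, 0) + α x * β ≤ f (c, 0) + α c * β := by
    intro x
    refine le_of_forall_pos_lt_add fun ε hε => ?_
    have hmem : ((x, α x + ε / (-β)) : (H →L[ℝ] ℝ) × ℝ) ∈ s := by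
      simp only [hs, Set.mem_setOf_eq]
      have : 0 < ε / (-β) := div_pos hε hγ
      linarith
    have h := hf _ hmem
    rw [hsplit c (α c), hsplit x (α x + ε / (-β))] at h
    have hc2 : ε / (-β) * β = -ε := by field_simp; rw [div_self hβneg.ne]
    have hr : (α x + ε / (-β)) * β = α x * β + -ε := by rw [add_mul, hc2]
    linarith
  refine ⟨((-β)⁻¹) • (f.comp (ContinuousLinearMap.inl ℝ (H →L[ℝ] ℝ) ℝ)).toLinearMap,
    α c - ((-β)⁻¹) * f (c, 0), fun x => ?_, by simp⟩
  have hk := key x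
  have hβinv : 0 < (-β)⁻¹ := inv_pos.2 hγ
  have h2 : (-β)⁻¹ * (f (x, 0) + α x * β) ≤ (-β)⁻¹ * (f (c, 0) + α c * β) :=
    mul_le_mul_of_nonneg_left hk (le_of_lt hβinv)
  have hb : (-β)⁻¹ * β = -1 := by field_simp; rw [div_self hβneg.ne]
  have e1 : (-β)⁻¹ * (f (x, 0) + α x * β) = (-β)⁻¹ * f (x, 0) - α x := by
    rw [mul_add, show (-β)⁻¹ * (α x * β) = α x * ((-β)⁻¹ * β) by ring, hb]; ring
  have e2 : (-β)⁻¹ * (f (c, 0) + α c * β) = (-β)⁻¹ * f (c, 0) - α c := by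
    rw [mul_add, show (-β)⁻¹ * (α c * β) = α c * ((-β)⁻¹ * β) by ring, hb]; ring
  have h3 : (-β)⁻¹ * f (x, 0) - α x ≤ (-β)⁻¹ * f (c, 0) - α c := by
    rw [← e1, ← e2]; exact h2
  have hx0 : ((f.comp (ContinuousLinearMap.inl ℝ (H →L[ℝ] ℝ) ℝ)).toLinearMap) x = f (x, 0) := rfl
  simp only [LinearMap.smul_apply, hx0, smul_eq_mul]
  linarith

set_option maxHeartbeats 1000000 in
theorem aux_fatness [FiniteDimensional ℝ H] (α : (H →L[ℝ] ℝ) → ℝ)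
    (hconv : ConvexOn ℝ Set.univ α)
    (l : (H →L[ℝ] ℝ) →ₗ[ℝ] ℝ) (r : ℝ) (hl : ∀ x, l x + r ≤ α x)
    (c : H →L[ℝ] ℝ) (hc : α c = l c + r) :
    ∃ ε > 0, ∀ v ∈ VF α c, ‖v‖ < ε → α (c + v) = l (c + v) + r := by
  classical
  set P : (H →L[ℝ] ℝ) → Prop :=
    fun v => ∃ τ > (0:ℝ), ∀ s : ℝ, |s| ≤ τ → α (c + s • v) = l (c + s • v) + r with hP
  -- midpoint lemma
  have hmid : ∀ x y : H →L[ℝ] ℝ, α x = l x + r → α y = l y + r →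
      α ((1/2 : ℝ) • x + (1/2 : ℝ) • y) = l ((1/2 : ℝ) • x + (1/2 : ℝ) • y) + r := by
    intro x y hx hy
    have h1 := hconv.2 (Set.mem_univ x) (Set.mem_univ y)
      (by norm_num : (0:ℝ) ≤ 1/2) (by norm_num : (0:ℝ) ≤ 1/2) (by norm_num)
    have h2 := hl ((1/2 : ℝ) • x + (1/2 : ℝ) • y)
    have h3 : l ((1/2 : ℝ) • x + (1/2 : ℝ) • y) = (1/2) * l x + (1/2) * l y := by
      simp [map_add, map_smul, smul_eq_mul]
    rw [smul_eq_mul, smul_eq_mul] at h1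
    linarith
  have Pzero : P 0 := ⟨1, one_pos, fun s _ => by simp [hc]⟩
  have Psmul : ∀ (a : ℝ) (v : H →L[ℝ] ℝ), P v → P (a • v) := by
    intro a v hv
    rcases eq_or_ne a 0 with rfl | ha
    · simpa using Pzero
    · obtain ⟨τ, hτ, hv⟩ := hv
      refine ⟨τ / |a|, div_pos hτ (abs_pos.2 ha), fun s hs => ?_⟩
      rw [smul_smul]
      apply hv
      rw [abs_mul]
      rw [le_div_iff₀ (abs_pos.2 ha)] at hs
      exact hs
  have Padd : ∀ v w : H →L[ℝ] ℝ, P v → P w → P (v + w) := by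
    intro v w hv hw
    obtain ⟨τ₁, hτ₁, hv⟩ := hv
    obtain ⟨τ₂, hτ₂, hw⟩ := hw
    refine ⟨min τ₁ τ₂ / 2, by positivity, fun s hs => ?_⟩
    have h1 : |2 * s| ≤ τ₁ := by
      rw [abs_mul]
      have := min_le_left τ₁ τ₂
      have h2 : |(2:ℝ)| = 2 := by norm_num
      rw [h2]; nlinarith [abs_nonneg s]
    have h2 : |2 * s| ≤ τ₂ := by
      rw [abs_mul]
      have := min_le_right τ₁ τ₂
      have h2 : |(2:ℝ)| = 2 := by norm_num
      rw [h2]; nlinarith [abs_nonneg s]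
    have e : c + s • (v + w) =
        (1/2 : ℝ) • (c + (2 * s) • v) + (1/2 : ℝ) • (c + (2 * s) • w) := by
      module
    rw [e]
    exact hmid _ _ (hv _ h1) (hw _ h2)
  -- generators
  have hgen : ∀ K : Set (H →L[ℝ] ℝ), IsFlat α K → InRelInterior c K →
      ∀ x ∈ K, P (x - c) := by
    intro K hKflat hKrel x hx
    obtain ⟨εK, hεK, hKmem⟩ := hKrel
    have hcK : c ∈ K := by
      have := hKmem 0 (Submodule.zero_mem _) (by simpa using hεK)
      simpa using this
    obtain ⟨-, -, lK, rK, hKaff⟩ := hKflat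
    have hxc : x - c ∈ flatSpan K := Submodule.subset_span ⟨x, hx, c, hcK, rfl⟩
    rcases eq_or_ne (x - c) 0 with h0 | h0
    · rw [h0]; exact Pzero
    have hnpos : 0 < ‖x - c‖ := norm_pos_iff.2 h0
    refine ⟨min 1 (εK / (2 * ‖x - c‖)), by positivity, fun s hs => ?_⟩
    have hnorm : ∀ s' : ℝ, |s'| ≤ min 1 (εK / (2 * ‖x - c‖)) → c + s' • (x - c) ∈ K := by
      intro s' hs'
      refine hKmem _ (Submodule.smul_mem _ _ hxc) ?_
      rw [norm_smul s' (x - c), Real.norm_eq_abs]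
      have h1 : |s'| ≤ εK / (2 * ‖x - c‖) := le_trans hs' (min_le_right _ _)
      have h2 : |s'| * ‖x - c‖ ≤ εK / 2 := by
        rw [div_mul_eq_div_div_swap] at h1
        calc |s'| * ‖x - c‖ ≤ (εK / ‖x - c‖ / 2) * ‖x - c‖ :=
          mul_le_mul_of_nonneg_right h1 (le_of_lt hnpos)
        _ = εK / 2 := by field_simp
      linarith
    set z := c + s • (x - c) with hz
    set z' := c + (-s) • (x - c) with hz'
    have hzK : z ∈ K := hnorm s hs
    have hz'K : z' ∈ K := hnorm (-s) (by rwa [abs_neg])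
    have hzz' : z + z' = c + c := by rw [hz, hz']; module
    have e1 := hKaff _ hzK
    have e2 := hKaff _ hz'K
    have e0 := hKaff c hcK
    have i1 := hl z
    have i2 := hl z'
    have m1 : lK z + lK z' = lK c + lK c := by rw [← map_add, hzz', map_add]
    have m2 : l z + l z' = l c + l c := by rw [← map_add, hzz', map_add]
    show α z = l z + r
    linarith
  -- every element of VF α c satisfies P
  have hPall : ∀ v ∈ VF α c, P v := by
    intro v hv
    refine Submodule.span_induction (p := fun v _ => P v) ?_ Pzero
      (fun x y _ _ hx hy => Padd x y hx hy) (fun a x _ hx => Psmul a x hx) hv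
    rintro v ⟨x, hx, y, hy, rfl⟩
    obtain ⟨K₁, hK₁, hxK₁⟩ := hx
    obtain ⟨K₂, hK₂, hyK₂⟩ := hy
    have p1 : P (x - c) := hgen K₁ hK₁.1 hK₁.2 x hxK₁
    have p2 : P (y - c) := hgen K₂ hK₂.1 hK₂.2 y hyK₂
    have : x - y = (x - c) + (-1 : ℝ) • (y - c) := by module
    rw [this]
    exact Padd _ _ p1 (Psmul _ _ p2)
  -- uniformization
  by_cases hbot : VF α c = ⊥
  · refine ⟨1, one_pos, fun v hv _ => ?_⟩
    rw [hbot, Submodule.mem_bot] at hv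
    simp [hv, hc]
  · set V := VF α c with hV
    clear_value V
    obtain ⟨k, b, hk⟩ : ∃ (k : ℕ) (_ : Module.Basis (Fin k) ℝ V), 0 < k :=
      ⟨Module.finrank ℝ V, @Module.finBasis ℝ V _ _ _ (Module.Free.of_divisionRing ℝ V) _ _,
        Module.finrank_pos_iff.mpr (Submodule.nontrivial_iff_ne_bot.mpr hbot)⟩
    haveI : Nonempty (Fin k) := Fin.pos_iff_nonempty.mp hk
    choose τ hτpos hτ using fun i : Fin k => hPall ((b i : H →L[ℝ] ℝ)) (b i).2
    set τ₀ := Finset.univ.inf' Finset.univ_nonempty τ with hτ₀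
    have hτ₀pos : 0 < τ₀ := by
      rw [hτ₀, Finset.lt_inf'_iff]
      exact fun i _ => hτpos i
    have hτ₀le : ∀ i, τ₀ ≤ τ i := fun i => Finset.inf'_le _ (Finset.mem_univ i)
    let e : V →ₗ[ℝ] (Fin k → ℝ) := b.equivFun.toLinearMap
    have hcont2 : Continuous fun u : V => b.equivFun u :=
      e.continuous_of_finiteDimensional (E := V)
    obtain ⟨ε, hε, hball⟩ := Metric.continuousAt_iff.mp (hcont2.continuousAt (x := 0))
      (τ₀ / k) (by positivity)
    refine ⟨ε, hε, ?_⟩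
    intro v hv hnv
    set u : V := ⟨v, hv⟩ with hu
    have hdu : dist u 0 < ε := by
      rw [dist_zero_right u]
      exact hnv
    have hcoords := hball hdu
    rw [map_zero, dist_zero_right] at hcoords
    set a : Fin k → ℝ := b.equivFun u with ha
    have hco : ∀ i, |a i| < τ₀ / k := fun i =>
      lt_of_le_of_lt (by rw [← Real.norm_eq_abs]; exact norm_le_pi_norm a i) hcoords
    set x : Fin k → (H →L[ℝ] ℝ) := fun i => c + ((k : ℝ) * a i) • (b i : H →L[ℝ] ℝ) with hx
    have hxZ : ∀ i, α (x i) = l (x i) + r := by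
      intro i
      apply hτ i ((k : ℝ) * a i)
      rw [abs_mul, abs_of_nonneg (by positivity : (0:ℝ) ≤ (k:ℝ))]
      have h1 : (k : ℝ) * |a i| ≤ (k : ℝ) * (τ₀ / k) :=
        mul_le_mul_of_nonneg_left (le_of_lt (hco i)) (by positivity)
      have hk0 : (k : ℝ) ≠ 0 := by positivity
      rw [mul_div_cancel₀ _ hk0] at h1
      exact h1.trans (hτ₀le i)
    have hbv : ∑ i, a i • (b i : H →L[ℝ] ℝ) = v := by
      have h1 := b.sum_equivFun u
      have h2 := congrArg (Submodule.subtype V) h1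
      simp only [map_sum, map_smul, Submodule.subtype_apply] at h2; exact h2
    have hsum : ∑ i : Fin k, ((k : ℝ)⁻¹) • x i = c + v := by
      have hk0 : (k : ℝ) ≠ 0 := by positivity
      calc ∑ i : Fin k, ((k : ℝ)⁻¹) • x i
          = ∑ i : Fin k, (((k : ℝ)⁻¹) • c + a i • (b i : H →L[ℝ] ℝ)) := by
            refine Finset.sum_congr rfl fun i _ => ?_
            rw [hx, smul_add, smul_smul, ← mul_assoc, inv_mul_cancel₀ hk0, one_mul]
        _ = (∑ _i : Fin k, ((k : ℝ)⁻¹) • c) + ∑ i, a i • (b i : H →L[ℝ] ℝ) :=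
            Finset.sum_add_distrib
        _ = c + v := by
            rw [hbv, Finset.sum_const, Finset.card_univ, Fintype.card_fin]
            congr 1
            rw [← Nat.cast_smul_eq_nsmul ℝ, smul_smul, mul_inv_cancel₀ hk0, one_smul]
    have hJ := hconv.map_sum_le (t := Finset.univ) (w := fun _ : Fin k => (k : ℝ)⁻¹)
      (p := x) (fun i _ => by positivity)
      (by
        rw [Finset.sum_const, Finset.card_univ, Fintype.card_fin, nsmul_eq_mul]
        field_simp)
      (fun i _ => Set.mem_univ _)
    rw [hsum] at hJ
    have hRHS : ∑ i : Fin k, (k : ℝ)⁻¹ • α (x i) = l (c + v) + r := by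
      have hk0 : (k : ℝ) ≠ 0 := by positivity
      calc ∑ i : Fin k, (k : ℝ)⁻¹ • α (x i)
          = ∑ i : Fin k, (l ((k : ℝ)⁻¹ • x i) + (k : ℝ)⁻¹ * r) := by
            refine Finset.sum_congr rfl fun i _ => ?_
            rw [hxZ i, map_smul, smul_eq_mul, smul_eq_mul, mul_add]
        _ = l (∑ i : Fin k, (k : ℝ)⁻¹ • x i) + ∑ _i : Fin k, (k : ℝ)⁻¹ * r := by
            rw [Finset.sum_add_distrib, map_sum]
        _ = l (c + v) + r := by
            rw [hsum, Finset.sum_const, Finset.card_univ, Fintype.card_fin, nsmul_eq_mul,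
              ← mul_assoc, mul_inv_cancel₀ hk0, one_mul]
    rw [hRHS] at hJ
    exact le_antisymm hJ (hl (c + v))

theorem curve_in_flat [FiniteDimensional ℝ H] (α : (H →L[ℝ] ℝ) → ℝ)
    (hconv : ConvexOn ℝ Set.univ α)
    (R : (H →L[ℝ] ℝ) → Submodule ℝ (H →L[ℝ] ℝ)) (hR : ∀ c, R c ≤ VF α c)
    (cc : ℝ → H →L[ℝ] ℝ) (hcc : Admissible R cc) :
    ∃ K : Set (H →L[ℝ] ℝ), IsFlat α K ∧ Set.range cc ⊆ K := by
  have hcont : Continuous α := by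
    rw [← continuousOn_univ]
    exact hconv.continuousOn isOpen_univ
  obtain ⟨l, r, hl, hc0⟩ := aux_subgradient α hconv hcont (cc 0)
  set K : Set (H →L[ℝ] ℝ) := {x | α x = l x + r} with hK
  have hlcont : Continuous fun x : H →L[ℝ] ℝ => l x + r :=
    (LinearMap.continuous_of_finiteDimensional l).add continuous_const
  have hKflat : IsFlat α K := by
    refine ⟨isClosed_eq hcont hlcont, ?_, l, r, fun x hx => hx⟩
    intro x hx y hy a b ha hb hab
    have h1 := hconv.2 (Set.mem_univ x) (Set.mem_univ y) ha hb hab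
    have h2 := hl (a • x + b • y)
    have h3 : l (a • x + b • y) + r = a * (l x + r) + b * (l y + r) := by
      simp only [map_add, map_smul, smul_eq_mul]
      have : a * r + b * r = r := by rw [← add_mul, hab, one_mul]
      linarith [this]
    show α (a • x + b • y) = l (a • x + b • y) + r
    rw [hK, Set.mem_setOf_eq] at hx hy
    rw [smul_eq_mul, smul_eq_mul] at h1
    have hx' : a * α x = a * (l x + r) := by rw [hx]
    have hy' : b * α y = b * (l y + r) := by rw [hy]
    linarith [h1, h2, h3, hx', hy']
  refine ⟨K, hKflat, ?_⟩
  set T : Set ℝ := cc ⁻¹' K with hT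
  have hTclosed : IsClosed T := (isClosed_eq hcont hlcont).preimage hcc.1
  have hTopen : IsOpen T := by
    rw [Metric.isOpen_iff]
    intro t₁ ht₁
    have hmem : α (cc t₁) = l (cc t₁) + r := ht₁
    obtain ⟨ε, hε, hfat⟩ := aux_fatness α hconv l r hl (cc t₁) hmem
    obtain ⟨δ, hδ, hadm⟩ := hcc.2 t₁
    obtain ⟨δ₂, hδ₂, hballc⟩ := Metric.continuousAt_iff.mp (hcc.1.continuousAt (x := t₁)) ε hε
    refine ⟨min δ δ₂, lt_min hδ hδ₂, fun t ht => ?_⟩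
    rw [Metric.mem_ball] at ht
    have htδ : dist t t₁ < δ := lt_of_lt_of_le ht (min_le_left _ _)
    have htδ₂ : dist t t₁ < δ₂ := lt_of_lt_of_le ht (min_le_right _ _)
    have hIcc : t ∈ Icc (t₁ - δ) (t₁ + δ) := by
      rw [Real.dist_eq, abs_sub_lt_iff] at htδ
      constructor <;> linarith [htδ.1, htδ.2]
    have hvR : cc t - cc t₁ ∈ R (cc t₁) := hadm t hIcc
    have hvVF : cc t - cc t₁ ∈ VF α (cc t₁) := hR (cc t₁) hvR
    have hvnorm : ‖cc t - cc t₁‖ < ε := by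
      have := hballc htδ₂
      rwa [dist_eq_norm] at this
    have := hfat _ hvVF hvnorm
    rw [add_sub_cancel] at this
    exact this
  have hTuniv : T = Set.univ := IsClopen.eq_univ ⟨hTclosed, hTopen⟩ ⟨0, hc0⟩
  rintro x ⟨t, rfl⟩
  have : t ∈ T := hTuniv ▸ Set.mem_univ t
  exact this

/-- in the autonomous case, `R(c) = V(𝓖(c))^⊥ ⊂ E(c) = V(𝓐(c))^⊥`,
and by Massart's theorem `E(c) ⊂ VF(c)`, so `R(c) ⊂ VF(c)`; hence every
admissible curve, and every C-equivalence class, is contained in a flat of `α`.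
Here `M` is the compact manifold, `H` stands for `H₁(M,ℝ)`, `W U` for the image
of `H₁(U,ℝ)` in `H₁(M,ℝ)`, `𝒜 c` and `𝒢 c` for the projected Aubry set and set
of minimizing curves of `L - η`, `[η] = c` (for the autonomous Tonelli
Lagrangian `L`, one has `𝒜 c ⊆ 𝒢 c`), and `α` for Mather's convex superlinear
`α` function. -/
theorem autonomous_R_in_flat [FiniteDimensional ℝ H]
    {M : Type*} [TopologicalSpace M] [CompactSpace M]
    (W : Set M → Submodule ℝ H) (hW : ∀ U V : Set M, U ⊆ V → W U ≤ W V)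
    (𝒜 𝒢 : (H →L[ℝ] ℝ) → Set M) (h𝒜𝒢 : ∀ c, 𝒜 c ⊆ 𝒢 c)
    (α : (H →L[ℝ] ℝ) → ℝ) (hconv : ConvexOn ℝ Set.univ α)
    (hsl : ∀ C : ℝ, ∃ R₀ : ℝ, ∀ x : H →L[ℝ] ℝ, R₀ ≤ ‖x‖ → C * ‖x‖ ≤ α x)
    (hMassart : ∀ c, ann (VA W (𝒜 c)) ≤ VF α c) :
    (∀ c, ann (VA W (𝒢 c)) ≤ ann (VA W (𝒜 c))) ∧
    (∀ c, ann (VA W (𝒢 c)) ≤ VF α c) ∧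
    (∀ cc : ℝ → H →L[ℝ] ℝ, Admissible (fun c => ann (VA W (𝒢 c))) cc →
      ∃ K : Set (H →L[ℝ] ℝ), IsFlat α K ∧ Set.range cc ⊆ K) ∧
    (∀ c₀ c₁ : H →L[ℝ] ℝ, CEquiv (fun c => ann (VA W (𝒢 c))) c₀ c₁ →
      ∃ K : Set (H →L[ℝ] ℝ), IsFlat α K ∧ c₀ ∈ K ∧ c₁ ∈ K) := by
  have hVA : ∀ c, VA W (𝒜 c) ≤ VA W (𝒢 c) := fun c =>
    le_iInf₂ fun U hU => iInf₂_le U ⟨hU.1, (h𝒜𝒢 c).trans hU.2⟩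
  have h1 : ∀ c, ann (VA W (𝒢 c)) ≤ ann (VA W (𝒜 c)) := fun c f hf v hv =>
    hf v (hVA c hv)
  have h2 : ∀ c, ann (VA W (𝒢 c)) ≤ VF α c := fun c => (h1 c).trans (hMassart c)
  have h3 : ∀ cc : ℝ → H →L[ℝ] ℝ, Admissible (fun c => ann (VA W (𝒢 c))) cc →
      ∃ K : Set (H →L[ℝ] ℝ), IsFlat α K ∧ Set.range cc ⊆ K := fun cc hcc =>
    curve_in_flat α hconv _ h2 cc hcc
  refine ⟨h1, h2, h3, ?_⟩
  rintro c₀ c₁ ⟨cc, hadm, h0, hone⟩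
  obtain ⟨K, hKflat, hKsub⟩ := h3 cc hadm
  exact ⟨K, hKflat, h0 ▸ hKsub ⟨0, rfl⟩, hone ▸ hKsub ⟨1, rfl⟩⟩

end
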